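/- Let b be a strict cross ratio on the unit circle S¹. Then for every triple of pairwise distinct points x, y, z ∈ S¹, the map t ↦ b(x,y,z,t) is injective on S¹ ∖ {z}: if a, c ∈ S¹ with a ≠ z, c ≠ z and b(x,y,z,a) = b(x,y,z,c), then a = c. -/

import Mathlib

/-- The unit circle in `ℂ`, with its subspace topology. -/
def UnitCircle : Type := {z : ℂ // ‖z‖ = 1}

noncomputable instance : TopologicalSpace UnitCircle :=
  instTopologicalSpaceSubtype

/-- For a strict cross ratio `b` on the circle and pairwise distinct points
`x, y, z`, the map `t ↦ b x y z t` is injective on `S¹ \ {z}`. -/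
theorem strictCrossRatio_injective
    (b : UnitCircle → UnitCircle → UnitCircle → UnitCircle → ℝ)
    (hcont : ContinuousOn
      (fun p : UnitCircle × UnitCircle × UnitCircle × UnitCircle =>
        b p.1 p.2.1 p.2.2.1 p.2.2.2)
      {p | p.1 ≠ p.2.1 ∧ p.2.2.1 ≠ p.2.2.2})
    (ha1 : ∀ x y z t : UnitCircle, x ≠ y → z ≠ t → b x y z t = b z t x y)
    (ha2 : ∀ x y z t w : UnitCircle, x ≠ y → z ≠ t → x ≠ w → z ≠ w →
      b x y z t = b x y z w * b x w z t)
    (ha3 : ∀ x y z t w : UnitCircle, x ≠ y → z ≠ t → w ≠ y → w ≠ t →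
      b x y z t = b x y w t * b w y z t)
    (ha4 : ∀ x y z t : UnitCircle, x ≠ y → z ≠ t →
      (b x y z t = 1 ↔ x = z ∨ y = t))
    (ha5 : ∀ x y z t : UnitCircle, x ≠ y → z ≠ t →
      (b x y z t = 0 ↔ t = x ∨ z = y)) :
    ∀ x y z : UnitCircle, x ≠ y → y ≠ z → x ≠ z →
      ∀ a c : UnitCircle, a ≠ z → c ≠ z →
        b x y z a = b x y z c → a = c := by
  intro x y z hxy hyz hxz a c haz hcz heq
  by_cases hax : a = x
  · -- then b x y z a = 0, so b x y z c = 0, forcing c = x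
    have h0 : b x y z a = 0 := by
      rw [ha5 x y z a hxy (Ne.symm haz)]
      exact Or.inl hax
    have h0' : b x y z c = 0 := heq ▸ h0
    rcases (ha5 x y z c hxy (Ne.symm hcz)).mp h0' with h | h
    · rw [hax, h]
    · exact absurd h.symm hyz
  · by_cases hcx : c = x
    · have h0' : b x y z c = 0 := by
        rw [ha5 x y z c hxy (Ne.symm hcz)]
        exact Or.inl hcx
      rcases (ha5 x y z a hxy (Ne.symm haz)).mp (heq.trans h0') with h | h
      · rw [hcx, h]
      · exact absurd h.symm hyz
    · have hbc : b x y z c ≠ 0 := by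
        intro h0
        rcases (ha5 x y z c hxy (Ne.symm hcz)).mp h0 with h | h
        · exact hcx h
        · exact hyz h.symm
      have h2 := ha2 x y z a c hxy (Ne.symm haz) (Ne.symm hcx) (Ne.symm hcz)
      rw [heq] at h2
      have h1 : b x c z a = 1 :=
        mul_left_cancel₀ hbc (by rw [mul_one, ← h2])
      rcases (ha4 x c z a (Ne.symm hcx) (Ne.symm haz)).mp h1 with h | h
      · exact absurd h hxz
      · exact h.symm
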